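/- For integers 2 ≤ a ≤ b, and the complete hypersurface R = ℂ[[x,y]]/(x^a − y^b), the jacobian ideal J = (x^{a−1}, y^{b−1})R satisfies J^a = x^{a−1}·J^{a−1}, i.e., the parameter ideal Q = (x^{a−1}) is a reduction of J; consequently the Hilbert–Samuel multiplicity e(J) equals (a−1)b. -/

import Mathlib

set_option synthInstance.maxHeartbeats 1000000
set_option maxHeartbeats 1000000
set_option linter.unusedSectionVars false


open MvPowerSeries

/-- The hypersurface `R = ℂ[[x,y]]/(x^a − y^b)`. -/
abbrev HypSurf (a b : ℕ) : Type :=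
  MvPowerSeries (Fin 2) ℂ ⧸
    Ideal.span {(X 0 : MvPowerSeries (Fin 2) ℂ) ^ a - (X 1 : MvPowerSeries (Fin 2) ℂ) ^ b}

open Finsupp

abbrev PP : Type := MvPowerSeries (Fin 2) ℂ


noncomputable def DD (p : ℕ × ℕ) : Fin 2 →₀ ℕ := single 0 p.1 + single 1 p.2

@[simp] lemma DD_apply0 (p : ℕ × ℕ) : DD p 0 = p.1 := by
  simp [DD, Finsupp.single_apply]

@[simp] lemma DD_apply1 (p : ℕ × ℕ) : DD p 1 = p.2 := by
  simp [DD, Finsupp.single_apply]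

lemma DD_inj {p q : ℕ × ℕ} (h : DD p = DD q) : p = q := by
  have h0 := congrFun (congrArg (fun f : Fin 2 →₀ ℕ => (f : Fin 2 → ℕ)) h) 0
  have h1 := congrFun (congrArg (fun f : Fin 2 →₀ ℕ => (f : Fin 2 → ℕ)) h) 1
  simp at h0 h1
  exact Prod.ext h0 h1

lemma eq_DD (d : Fin 2 →₀ ℕ) : d = DD (d 0, d 1) := by
  ext x; fin_cases x <;> simp

lemma mon_eq (p : ℕ × ℕ) :
    (X 0 : PP) ^ p.1 * (X 1 : PP) ^ p.2 = monomial (DD p) 1 := by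
  rw [X_pow_eq, X_pow_eq, monomial_mul_monomial, one_mul]; rfl

lemma DD_le_iff {p : ℕ × ℕ} {d : Fin 2 →₀ ℕ} :
    DD p ≤ d ↔ p.1 ≤ d 0 ∧ p.2 ≤ d 1 := by
  constructor
  · intro h; exact ⟨by simpa using h 0, by simpa using h 1⟩
  · intro h x
    fin_cases x
    · simpa using h.1
    · simpa using h.2


/-- Membership in the monomial ideal `(x^m, y^n)` of `ℂ[[x,y]]`. -/
theorem memL {m n : ℕ} {f : PP} :
    f ∈ Ideal.span {(X 0 : PP) ^ m, (X 1 : PP) ^ n} ↔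
      ∀ d : Fin 2 →₀ ℕ, d 0 < m → d 1 < n → coeff d f = 0 := by
  constructor
  · rintro hf d hd0 hd1
    obtain ⟨g, h, rfl⟩ := Ideal.mem_span_pair.mp hf
    have h1 : coeff d (g * X 0 ^ m) = 0 := by
      have : (X 0 : PP) ^ m ∣ g * X 0 ^ m := Dvd.intro_left g rfl
      exact (X_pow_dvd_iff.mp this) d hd0
    have h2 : coeff d (h * X 1 ^ n) = 0 := by
      have : (X 1 : PP) ^ n ∣ h * X 1 ^ n := Dvd.intro_left h rfl
      exact (X_pow_dvd_iff.mp this) d hd1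
    simp [map_add, h1, h2]
  · intro hf
    classical
    set f₁ : PP := fun d => if m ≤ d 0 then f d else 0 with hf₁
    have c₁ : ∀ d, coeff d f₁ = if m ≤ d 0 then coeff d f else 0 := fun d => rfl
    have d₁ : (X 0 : PP) ^ m ∣ f₁ := by
      rw [X_pow_dvd_iff]
      intro d hd
      rw [c₁, if_neg (by omega)]
    have d₂ : (X 1 : PP) ^ n ∣ f - f₁ := by
      rw [X_pow_dvd_iff]
      intro d hd
      rw [map_sub, c₁]
      by_cases h : m ≤ d 0
      · rw [if_pos h, sub_self]
      · rw [if_neg h, hf d (by omega) hd, sub_zero]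
    have : f = f₁ + (f - f₁) := by ring
    rw [this]
    refine Ideal.add_mem _ ?_ ?_
    · exact Ideal.mem_span_pair.mpr ⟨d₁.choose, 0, by rw [zero_mul, add_zero, mul_comm]; exact d₁.choose_spec.symm⟩
    · exact Ideal.mem_span_pair.mpr ⟨0, d₂.choose, by rw [zero_mul, zero_add, mul_comm]; exact d₂.choose_spec.symm⟩



noncomputable def QQ (a b : ℕ) : Ideal (HypSurf a b) :=
  Ideal.span {Ideal.Quotient.mk _ (X 0) ^ (a - 1)}

theorem QQ_eq (a b : ℕ) :
    QQ a b = Ideal.span {Ideal.Quotient.mk _ ((X 0 : PP)^(a-1))} := by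
  rw [map_pow]; rfl

noncomputable def piab (a b : ℕ) : PP →ₐ[ℂ] (HypSurf a b ⧸ QQ a b) :=
  (Ideal.Quotient.mkₐ ℂ (QQ a b)).comp (Ideal.Quotient.mkₐ ℂ _)

theorem piab_apply (a b : ℕ) (f : PP) :
    piab a b f = Ideal.Quotient.mk (QQ a b) (Ideal.Quotient.mk _ f) := rfl

theorem piab_surjective (a b : ℕ) : Function.Surjective (piab a b) := by
  intro x
  obtain ⟨y, rfl⟩ := Ideal.Quotient.mk_surjective x
  obtain ⟨f, rfl⟩ := Ideal.Quotient.mk_surjective y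
  exact ⟨f, rfl⟩

theorem spanEq {a b : ℕ} (ha : 2 ≤ a) :
    Ideal.span {(X 0 : PP) ^ a - (X 1 : PP) ^ b, (X 0 : PP) ^ (a-1)} =
      Ideal.span {(X 0 : PP) ^ (a-1), (X 1 : PP) ^ b} := by
  have hx : (X 0 : PP) ^ a = X 0 * (X 0 : PP) ^ (a-1) := by
    rw [← pow_succ']; congr 1; omega
  apply le_antisymm <;> rw [Ideal.span_le] <;> rintro u (rfl | rfl)
  · refine sub_mem ?_ ?_
    · rw [hx]
      exact Ideal.mul_mem_left _ _ (Ideal.subset_span (by simp))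
    · exact Ideal.subset_span (by simp)
  · exact Ideal.subset_span (by simp)
  · exact Ideal.subset_span (by simp)
  · have m1 : (X 0:PP)^(a-1) ∈ Ideal.span {(X 0:PP)^a - (X 1:PP)^b, (X 0:PP)^(a-1)} :=
      Ideal.subset_span (by simp)
    have m2 : (X 0:PP)^a - (X 1:PP)^b ∈ Ideal.span {(X 0:PP)^a - (X 1:PP)^b, (X 0:PP)^(a-1)} :=
      Ideal.subset_span (by simp)
    have h2 := sub_mem (Ideal.mul_mem_left _ (X 0) m1) m2
    rw [SetLike.mem_coe]
    convert h2 using 1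
    rw [← hx]; ring

theorem piab_eq_zero_iff {a b : ℕ} (ha : 2 ≤ a) {f : PP} :
    piab a b f = 0 ↔ f ∈ Ideal.span {(X 0 : PP) ^ (a-1), (X 1 : PP) ^ b} := by
  rw [← spanEq ha]
  set v : PP := (X 0 : PP) ^ a - (X 1 : PP) ^ b
  set u : PP := (X 0 : PP) ^ (a-1)
  have hmku : (Ideal.Quotient.mk (Ideal.span {v})) u
      = Ideal.Quotient.mk (Ideal.span {v}) (X 0) ^ (a-1) := by
    rw [map_pow]
  constructor
  · intro h
    rw [piab_apply] at h
    have h' : Ideal.Quotient.mk _ f ∈ QQ a b := Ideal.Quotient.eq_zero_iff_mem.mp h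
    rw [QQ_eq, Ideal.mem_span_singleton'] at h'
    obtain ⟨r, hr⟩ := h'
    obtain ⟨g, rfl⟩ := Ideal.Quotient.mk_surjective r
    rw [← map_mul, Ideal.Quotient.mk_eq_mk_iff_sub_mem] at hr
    obtain ⟨c, hc⟩ := Ideal.mem_span_singleton'.mp hr
    exact Ideal.mem_span_pair.mpr ⟨-c, g, by rw [neg_mul, hc]; ring⟩
  · intro h
    obtain ⟨c, g, rfl⟩ := Ideal.mem_span_pair.mp h
    have hv : Ideal.Quotient.mk (Ideal.span {v}) v = 0 :=
      Ideal.Quotient.eq_zero_iff_mem.mpr (Ideal.subset_span rfl)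
    rw [piab_apply, Ideal.Quotient.eq_zero_iff_mem]
    rw [map_add, map_mul, map_mul, hv, mul_zero, zero_add]
    exact Ideal.mul_mem_left _ _ (by rw [QQ_eq]; exact Ideal.subset_span rfl)
section Master
variable (a b : ℕ)

/-- index type for the monomial basis -/
abbrev ii : Type := Fin (a - 1) × Fin b

def emb (p : ii a b) : ℕ × ℕ := (p.1.1, p.2.1)

lemma em_inj : Function.Injective (emb a b) := by
  rintro ⟨⟨i, hi⟩, ⟨j, hj⟩⟩ ⟨⟨i', hi'⟩, ⟨j', hj'⟩⟩ h
  simp [emb] at h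
  simp [h.1, h.2]

noncomputable def vv (p : ii a b) : HypSurf a b ⧸ QQ a b :=
  piab a b (monomial (DD (emb a b p)) 1)

lemma coeff_sum' (c : ii a b → ℂ) (q : ℕ × ℕ) :
    coeff (DD q) (∑ p : ii a b, c p • (monomial (DD (emb a b p)) 1 : PP)) =
      if h : q.1 < a - 1 ∧ q.2 < b then c (⟨q.1, h.1⟩, ⟨q.2, h.2⟩) else 0 := by
  rw [map_sum]
  have key : ∀ p : ii a b,
      coeff (DD q) (c p • (monomial (DD (emb a b p)) 1 : PP)) =
        if emb a b p = q then c p else 0 := by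
    intro p
    rw [map_smul, coeff_monomial, smul_eq_mul]
    by_cases h : emb a b p = q
    · rw [if_pos h, if_pos (by rw [h]), mul_one]
    · rw [if_neg h, if_neg (fun hd => h (DD_inj hd).symm), mul_zero]
  rw [Finset.sum_congr rfl fun p _ => key p]
  by_cases h : q.1 < a - 1 ∧ q.2 < b
  · rw [dif_pos h]
    rw [Finset.sum_eq_single ((⟨q.1, h.1⟩, ⟨q.2, h.2⟩) : ii a b)]
    · rw [if_pos (by simp [emb])]
    · intro p _ hp
      rw [if_neg]
      intro he
      exact hp (em_inj a b (by rw [he]; rfl))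
    · intro hmem; exact absurd (Finset.mem_univ _) hmem
  · rw [dif_neg h]
    refine Finset.sum_eq_zero fun p _ => ?_
    rw [if_neg]
    rintro rfl
    exact h ⟨p.1.2, p.2.2⟩

variable {a b} (ha : 2 ≤ a) (hab : a ≤ b)

include ha hab in
lemma master (f : PP) :
    piab a b f = ∑ p : ii a b, coeff (DD (emb a b p)) f • vv a b p := by
  have hz : piab a b (f - ∑ p : ii a b, coeff (DD (emb a b p)) f • monomial (DD (emb a b p)) 1)
      = 0 := by
    rw [piab_eq_zero_iff ha, memL]
    intro d hd0 hd1
    rw [map_sub, show d = DD (d 0, d 1) from eq_DD d, coeff_sum']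
    rw [dif_pos (⟨hd0, hd1⟩ : (d 0, d 1).1 < a - 1 ∧ (d 0, d 1).2 < b)]
    simp [emb]
  rw [map_sub, sub_eq_zero, map_sum] at hz
  rw [hz]
  refine Finset.sum_congr rfl fun p _ => ?_
  rw [map_smul, vv]
end Master
section BasisPart
variable {a b : ℕ} (ha : 2 ≤ a) (hab : a ≤ b)

include ha hab in
lemma vv_indep : LinearIndependent ℂ (vv a b) := by
  rw [Fintype.linearIndependent_iff]
  intro g hg p
  set F : PP := ∑ p : ii a b, g p • (monomial (DD (emb a b p)) 1 : PP) with hF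
  have hπ : piab a b F = 0 := by
    rw [hF, map_sum]
    rw [← hg]
    refine Finset.sum_congr rfl fun p _ => ?_
    rw [map_smul, vv]
  have hco := (memL.mp ((piab_eq_zero_iff ha).mp hπ))
  have := hco (DD (emb a b p)) (by simpa [emb] using p.1.2) (by simpa [emb] using p.2.2)
  rw [hF, coeff_sum'] at this
  rwa [dif_pos (⟨p.1.2, p.2.2⟩ : (emb a b p).1 < a - 1 ∧ (emb a b p).2 < b)] at this

include ha hab in
lemma vv_span : ⊤ ≤ Submodule.span ℂ (Set.range (vv a b)) := by
  rintro x -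
  obtain ⟨f, rfl⟩ := piab_surjective a b x
  rw [master ha hab]
  exact Submodule.sum_mem _ fun p _ =>
    Submodule.smul_mem _ _ (Submodule.subset_span ⟨p, rfl⟩)

noncomputable def bb : Module.Basis (ii a b) ℂ (HypSurf a b ⧸ QQ a b) :=
  Module.Basis.mk (vv_indep ha hab) (vv_span ha hab)

include ha hab in
lemma findim : FiniteDimensional ℂ (HypSurf a b ⧸ QQ a b) :=
  Module.Finite.of_basis (bb ha hab)

include ha hab in
lemma frank : Module.finrank ℂ (HypSurf a b ⧸ QQ a b) = (a - 1) * b := by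
  rw [Module.finrank_eq_card_basis (bb ha hab), Fintype.card_prod, Fintype.card_fin,
    Fintype.card_fin]
end BasisPart
def ww (a b : ℕ) (p : ii a b) : ℕ := p.1.1 * b + p.2.1

section ChainPart
variable {a b : ℕ} (ha : 2 ≤ a) (hab : a ≤ b)

include ha hab in
lemma smul_vv_mem (r : HypSurf a b) (p : ii a b) :
    r • vv a b p ∈ Submodule.span ℂ (vv a b '' {q | ww a b p ≤ ww a b q}) := by
  obtain ⟨f, rfl⟩ := Ideal.Quotient.mk_surjective r
  have hr : (Ideal.Quotient.mk _ f : HypSurf a b) • vv a b p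
      = piab a b (f * monomial (DD (emb a b p)) 1) := rfl
  rw [hr, master ha hab]
  refine Submodule.sum_mem _ fun q _ => ?_
  by_cases hle : DD (emb a b p) ≤ DD (emb a b q)
  · refine Submodule.smul_mem _ _ (Submodule.subset_span ⟨q, ?_, rfl⟩)
    obtain ⟨h1, h2⟩ := DD_le_iff.mp hle
    simp only [emb, DD_apply0, DD_apply1] at h1 h2
    show ww a b p ≤ ww a b q
    exact Nat.add_le_add (Nat.mul_le_mul_right b h1) h2
  · rw [coeff_mul_monomial, if_neg hle, zero_smul]
    exact Submodule.zero_mem _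

noncomputable def NN (t : ℕ) : Submodule (HypSurf a b) (HypSurf a b ⧸ QQ a b) :=
  Submodule.span _ (vv a b '' {q | t ≤ ww a b q})

include ha hab in
lemma NN_le_cspan (t : ℕ) :
    (NN (a := a) (b := b) t : Set (HypSurf a b ⧸ QQ a b)) ⊆
      (Submodule.span ℂ (vv a b '' {q | t ≤ ww a b q}) : Set (HypSurf a b ⧸ QQ a b)) := by
  intro x hx
  refine Submodule.span_induction (p := fun x _ =>
    x ∈ Submodule.span ℂ (vv a b '' {q | t ≤ ww a b q})) ?_ ?_ ?_ ?_ hx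
  · exact fun y hy => Submodule.subset_span hy
  · exact Submodule.zero_mem _
  · exact fun y z _ _ hy hz => Submodule.add_mem _ hy hz
  · intro r y _ hy
    -- show the ℂ-span is stable under `r •`
    refine Submodule.span_induction (p := fun y _ =>
      r • y ∈ Submodule.span ℂ (vv a b '' {q | t ≤ ww a b q})) ?_ ?_ ?_ ?_ hy
    · rintro z ⟨q, hq, rfl⟩
      show r • vv a b q ∈ _
      refine Submodule.span_mono (Set.image_mono ?_) (smul_vv_mem ha hab r q)
      intro q' hq'
      simp only [Set.mem_setOf_eq] at hq hq' ⊢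
      exact le_trans hq hq'
    · show r • (0 : HypSurf a b ⧸ QQ a b) ∈ _
      rw [smul_zero]; exact Submodule.zero_mem _
    · intro u v _ _ hu hv
      show r • (u + v) ∈ _
      rw [smul_add]; exact Submodule.add_mem _ hu hv
    · intro c u _ hu
      show r • (c • u) ∈ _
      rw [smul_comm]
      exact Submodule.smul_mem _ _ hu

include ha hab in
lemma NN_strict {t : ℕ} (ht : t < (a - 1) * b) :
    NN (a := a) (b := b) (t + 1) < NN (a := a) (b := b) t := by
  have hb : 0 < b := by omega
  have hdiv : t / b < a - 1 := Nat.div_lt_of_lt_mul (by rw [Nat.mul_comm]; exact ht)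
  set p₀ : ii a b := (⟨t / b, hdiv⟩, ⟨t % b, Nat.mod_lt _ hb⟩) with hp₀
  have hw : ww a b p₀ = t := by
    show t / b * b + t % b = t
    rw [Nat.mul_comm]
    exact Nat.div_add_mod t b
  constructor
  · refine Submodule.span_mono (Set.image_mono fun q hq => ?_)
    simp only [Set.mem_setOf_eq] at hq ⊢
    omega
  · intro hle
    have h1 : vv a b p₀ ∈ NN (a := a) (b := b) t :=
      Submodule.subset_span ⟨p₀, le_of_eq hw.symm, rfl⟩
    have h2 := NN_le_cspan ha hab (t + 1) (hle h1)
    have h3 : p₀ ∉ {q | t + 1 ≤ ww a b q} := by simp [hw]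
    exact (vv_indep ha hab).notMem_span_image h3 h2
end ChainPart
section Krull
variable {a b : ℕ} (ha : 2 ≤ a) (hab : a ≤ b)

include ha hab in
lemma krull_eq :
    Order.krullDim (Submodule (HypSurf a b) (HypSurf a b ⧸ QQ a b)) = (((a-1) * b : ℕ) : WithBot ℕ∞) := by
  set n := (a - 1) * b with hn
  apply le_antisymm
  · haveI := findim ha hab
    rw [Order.krullDim_eq_iSup_length]
    have : (⨆ (P : LTSeries (Submodule (HypSurf a b) (HypSurf a b ⧸ QQ a b))), (P.length : ℕ∞))
        ≤ (n : ℕ∞) := by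
      refine iSup_le fun P => ?_
      have key : ∀ k : ℕ, ∀ hk : k ≤ P.length,
          k ≤ Module.finrank ℂ (Submodule.restrictScalars ℂ (P.toFun ⟨k, by omega⟩)) := by
        intro k
        induction k with
        | zero => intro _; exact Nat.zero_le _
        | succ k ih =>
          intro hk
          have h1 := ih (by omega)
          have hlt : P.toFun ⟨k, by omega⟩ < P.toFun ⟨k + 1, by omega⟩ :=
            P.strictMono (by simp [Fin.lt_def])
          have h2 := Submodule.finrank_lt_finrank_of_lt
            ((Submodule.restrictScalarsEmbedding ℂ _ _).strictMono hlt)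
          have h2' : Module.finrank ℂ (Submodule.restrictScalars ℂ (P.toFun ⟨k, by omega⟩)) < Module.finrank ℂ (Submodule.restrictScalars ℂ (P.toFun ⟨k + 1, by omega⟩)) := h2
          omega
      have h1 := key P.length le_rfl
      have h2 : Module.finrank ℂ
          (Submodule.restrictScalars ℂ (P.toFun ⟨P.length, by omega⟩))
          ≤ Module.finrank ℂ (HypSurf a b ⧸ QQ a b) := Submodule.finrank_le _
      have h3 := frank ha hab
      exact Nat.cast_le.mpr (by omega)
    exact_mod_cast this
  · exact Order.LTSeries.length_le_krullDim
      (⟨n, fun i => NN (a := a) (b := b) (n - i.1), fun i => by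
        have hi := i.2
        have e1 : n - i.castSucc.1 = (n - (i.1 + 1)) + 1 := by
          simp only [Fin.coe_castSucc]; omega
        have e2 : n - i.succ.1 = n - (i.1 + 1) := by simp only [Fin.val_succ]
        show NN (a := a) (b := b) (n - i.castSucc.1) < NN (a := a) (b := b) (n - i.succ.1)
        rw [e1, e2]
        exact NN_strict ha hab (by omega)⟩ :
        LTSeries (Submodule (HypSurf a b) (HypSurf a b ⧸ QQ a b)))
end Krull
lemma span_pow_le_span_pow {R : Type*} [CommRing R] {I J : Ideal R} (h : I ≤ J) (n : ℕ) :
    I ^ n ≤ J ^ n := by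
  induction n with
  | zero => simp
  | succ n ih =>
    rw [pow_succ, pow_succ]
    exact Ideal.mul_mono ih h

/-- For `R = ℂ[[x,y]]/(x^a − y^b)` with `2 ≤ a ≤ b`, the Jacobian ideal
`J = (x^{a−1}, y^{b−1})` satisfies `J^a = x^{a-1}·J^{a-1}`, i.e. the parameter ideal
`Q = (x^{a−1})` is a reduction of `J`; consequently the Hilbert–Samuel multiplicity
`e(J)` equals `ℓ(R/Q) = (a−1)b`, where the length of a module is expressed as the Krull
dimension of its lattice of submodules. -/
theorem stmt18 (a b : ℕ) (ha : 2 ≤ a) (hab : a ≤ b) (J Q : Ideal (HypSurf a b))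
    (hJ : J = Ideal.span {Ideal.Quotient.mk _ (X 0) ^ (a - 1),
      Ideal.Quotient.mk _ (X 1) ^ (b - 1)})
    (hQ : Q = Ideal.span {Ideal.Quotient.mk _ (X 0) ^ (a - 1)}) :
    J ^ a = Q * J ^ (a - 1) ∧
      Order.krullDim (Submodule (HypSurf a b) (HypSurf a b ⧸ Q)) = ((a - 1) * b : ℕ) := by
  have hQQ : Q = QQ a b := hQ
  constructor
  · set mk := Ideal.Quotient.mk (Ideal.span {(X 0 : PP) ^ a - (X 1 : PP) ^ b}) with hmk
    set p : HypSurf a b := mk (X 0) ^ (a-1) with hp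
    set q : HypSurf a b := mk (X 1) ^ (b-1) with hq
    rw [hJ, hQ]
    have hpJ : p ∈ Ideal.span {p, q} := Ideal.subset_span (by simp)
    have hqJ : q ∈ Ideal.span {p, q} := Ideal.subset_span (by simp)
    have hQJ : Ideal.span {p} ≤ Ideal.span {p, q} := by
      rw [Ideal.span_le]; simpa using hpJ
    have hqJ' : Ideal.span {q} ≤ Ideal.span {p, q} := by
      rw [Ideal.span_le]; simpa using hqJ
    have hkey : q ^ a ∈ Ideal.span {p} * Ideal.span {p, q} ^ (a - 1) := by
      have hdvd : ((X 0 : PP) ^ a - (X 1 : PP) ^ b) ∣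
          ((X 0 : PP) ^ a) ^ (a-1) - ((X 1 : PP) ^ b) ^ (a-1) :=
        sub_dvd_pow_sub_pow _ _ _
      have hmk0 : mk (((X 0 : PP) ^ a) ^ (a-1)) - mk (((X 1 : PP) ^ b) ^ (a-1)) = 0 := by
        rw [← map_sub, Ideal.Quotient.eq_zero_iff_mem]
        exact Ideal.mem_span_singleton.mpr hdvd
      have heq : mk (X 1) ^ (b * (a-1)) = mk (X 0) ^ (a * (a-1)) := by
        have h0 := sub_eq_zero.mp hmk0
        rw [map_pow, map_pow, ← pow_mul, ← pow_mul] at h0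
        exact h0.symm
      have hqa : q ^ a = p ^ a * mk (X 1) ^ (b - a) := by
        rw [hq, hp, ← pow_mul, ← pow_mul]
        have e1 : (b - 1) * a = b * (a-1) + (b - a) := by
          zify [show 1 ≤ b by omega, show 1 ≤ a by omega, hab]
          ring
        rw [e1, pow_add, heq, Nat.mul_comm a (a-1)]
      have e2 : p ^ a * mk (X 1) ^ (b - a) = p * (p ^ (a-1) * mk (X 1) ^ (b - a)) := by
        have e3 : a = 1 + (a - 1) := by omega
        calc p ^ a * mk (X 1) ^ (b - a)
            = p ^ (1 + (a-1)) * mk (X 1) ^ (b - a) := by rw [← e3]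
          _ = p * (p ^ (a-1) * mk (X 1) ^ (b - a)) := by rw [pow_add, pow_one, mul_assoc]
      rw [hqa, e2]
      exact Ideal.mul_mem_mul (Ideal.subset_span rfl)
        (Ideal.mul_mem_right _ _ (Ideal.pow_mem_pow hpJ _))
    have claim : ∀ k : ℕ, Ideal.span {p, q} ^ (k+1) ≤
        Ideal.span {p} * Ideal.span {p, q} ^ k + (Ideal.span {q}) ^ (k+1) := by
      intro k
      induction k with
      | zero =>
        rw [Submodule.pow_zero, Submodule.mul_one, Submodule.pow_one, Submodule.pow_one, Ideal.span_le]
        rintro u (rfl | rfl)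
        · exact Ideal.mem_sup_left (Ideal.subset_span rfl)
        · exact Ideal.mem_sup_right (Ideal.subset_span rfl)
      | succ k ih =>
        calc Ideal.span {p, q} ^ (k+1+1)
            = Ideal.span {p, q} ^ (k+1) * Ideal.span {p, q} := Submodule.pow_succ _
          _ ≤ (Ideal.span {p} * Ideal.span {p, q} ^ k + (Ideal.span {q}) ^ (k+1)) *
                Ideal.span {p, q} := Ideal.mul_mono_left ih
          _ = Ideal.span {p} * Ideal.span {p, q} ^ k * Ideal.span {p, q} +
                (Ideal.span {q}) ^ (k+1) * Ideal.span {p, q} := add_mul _ _ _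
          _ ≤ Ideal.span {p} * Ideal.span {p, q} ^ (k+1) +
                (Ideal.span {p} * Ideal.span {p, q} ^ (k+1) + (Ideal.span {q}) ^ (k+1+1)) := by
              refine add_le_add ?_ ?_
              · rw [mul_assoc, ← Submodule.pow_succ]
              · calc (Ideal.span {q}) ^ (k+1) * Ideal.span {p, q}
                    = (Ideal.span {q}) ^ (k+1) * Ideal.span {p} +
                      (Ideal.span {q}) ^ (k+1) * Ideal.span {q} := by
                        rw [← mul_add, Ideal.add_eq_sup, ← Ideal.span_union,
                          Set.singleton_union]
                  _ ≤ Ideal.span {p} * Ideal.span {p, q} ^ (k+1) + (Ideal.span {q}) ^ (k+1+1) := by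
                      refine add_le_add ?_ ?_
                      · rw [Submodule.mul_comm]
                        exact Ideal.mul_mono_right (span_pow_le_span_pow hqJ' _)
                      · rw [← Submodule.pow_succ]
          _ ≤ Ideal.span {p} * Ideal.span {p, q} ^ (k+1) + (Ideal.span {q}) ^ (k+1+1) := by
              rw [← add_assoc, Ideal.add_eq_sup (I := Ideal.span {p} * Ideal.span {p, q} ^ (k+1)),
                sup_idem]
    have hfin := claim (a - 1)
    rw [show a - 1 + 1 = a by omega] at hfin
    have hq' : (Ideal.span {q}) ^ a ≤ Ideal.span {p} * Ideal.span {p, q} ^ (a-1) := by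
      rw [Ideal.span_singleton_pow, Ideal.span_le]
      simpa using hkey
    apply le_antisymm
    · exact hfin.trans (by rw [Ideal.add_eq_sup]; exact sup_le le_rfl hq')
    · calc Ideal.span {p} * Ideal.span {p, q} ^ (a-1)
          ≤ Ideal.span {p, q} * Ideal.span {p, q} ^ (a-1) := Ideal.mul_mono_left hQJ
        _ = Ideal.span {p, q} ^ a := by
            refine (Submodule.pow_succ' (Ideal.span {p, q}) (n := a - 1) (by omega)).symm.trans ?_
            congr 1
            omega
  · rw [hQQ]
    exact krull_eq ha hab
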